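/- Let f : ℝ^{n+m} → M be 1-Lipschitz into a metric space and Q₀ = [0,1]^{n+m}. Suppose for every integer K there exists k ≤ K such that the union U_k of all dyadic cubes Q ⊆ Q₀ of sidelength 2^{-k} satisfying ℋⁿ_∞(f(Q)) < δ·side(Q)ⁿ has Lebesgue measure |U_k| > 1 − δ/√n. Then ℋ^{n,m}_∞(f, Q₀) ≤ 2δ, where ℋ^{n,m}_∞(f,A) = inf Σ ℋⁿ_∞(f(Q_j))·side(Q_j)^m over partitions of A into cubes. -/

import Mathlib

open Set MeasureTheory
open scoped ENNReal

/-- The `n`-dimensional Hausdorff content of a set: the infimum of `∑ rⱼⁿ` over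
countable covers by balls of radii `rⱼ`. -/
noncomputable def hausdorffContent (n : ℕ) {X : Type*} [PseudoMetricSpace X]
    (A : Set X) : ℝ≥0∞ :=
  ⨅ (c : ℕ → X) (r : ℕ → ℝ) (_ : A ⊆ ⋃ j, Metric.ball (c j) (r j)),
    ∑' j, ENNReal.ofReal (r j ^ n)

/-- The half-open axis-parallel cube with lower corner `a` and sidelength `s`. -/
def halfOpenCube {d : ℕ} (a : Fin d → ℝ) (s : ℝ) : Set (Fin d → ℝ) :=
  {x | ∀ i, a i ≤ x i ∧ x i < a i + s}

/-- The `(n,m)`-Hausdorff content of `(f, A)`: the infimum of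
`∑ ℋⁿ_∞(f(Qⱼ))·side(Qⱼ)ᵐ` over countable measure-theoretic partitions of `A`
into disjoint cubes `Qⱼ`. -/
noncomputable def hausdorffContentNM (n m : ℕ) {M : Type*} [PseudoMetricSpace M]
    (f : (Fin (n + m) → ℝ) → M) (A : Set (Fin (n + m) → ℝ)) : ℝ≥0∞ :=
  ⨅ (a : ℕ → Fin (n + m) → ℝ) (s : ℕ → ℝ)
    (_ : ∀ j, 0 ≤ s j)
    (_ : ∀ j, halfOpenCube (a j) (s j) ⊆ A)
    (_ : Pairwise (Function.onFun Disjoint fun j => halfOpenCube (a j) (s j)))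
    (_ : volume (A \ ⋃ j, halfOpenCube (a j) (s j)) = 0),
    ∑' j, hausdorffContent n (f '' halfOpenCube (a j) (s j)) * ENNReal.ofReal (s j ^ m)

section Aux
variable {d k : ℕ}

lemma halfOpenCube_eq_pi (a : Fin d → ℝ) (s : ℝ) :
    halfOpenCube a s = Set.pi univ (fun i => Ico (a i) (a i + s)) := by
  ext x; simp [halfOpenCube, Set.mem_univ_pi, mem_Ico]

lemma measurableSet_halfOpenCube (a : Fin d → ℝ) (s : ℝ) :
    MeasurableSet (halfOpenCube a s) := by
  rw [halfOpenCube_eq_pi]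
  exact MeasurableSet.univ_pi fun i => measurableSet_Ico

lemma volume_halfOpenCube (a : Fin d → ℝ) {s : ℝ} (hs : 0 ≤ s) :
    volume (halfOpenCube a s) = ENNReal.ofReal (s ^ d) := by
  rw [halfOpenCube_eq_pi, volume_pi_pi]
  simp only [Real.volume_Ico, add_sub_cancel_left]
  rw [Finset.prod_const, ENNReal.ofReal_pow hs]
  simp

lemma halfOpenCube_zero_empty (hd : d ≠ 0) (a : Fin d → ℝ) :
    halfOpenCube a 0 = (∅ : Set (Fin d → ℝ)) := by
  ext x
  simp only [halfOpenCube, mem_setOf_eq, mem_empty_iff_false, iff_false, not_forall]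
  exact ⟨⟨0, Nat.pos_of_ne_zero hd⟩, fun h => by linarith [h.1, h.2]⟩

lemma hausdorffContent_empty {n : ℕ} {X : Type*} [PseudoMetricSpace X] (x : X)
    (hn : n ≠ 0) : hausdorffContent n (∅ : Set X) = 0 := by
  refine le_antisymm ?_ zero_le
  refine le_trans (iInf_le_of_le (fun _ => x) (iInf_le_of_le (fun _ => (0:ℝ))
    (iInf_le_of_le (empty_subset _) le_rfl))) ?_
  simp [zero_pow hn]

lemma hausdorffContent_image_le {n : ℕ} {M : Type*} [MetricSpace M]
    {f : (Fin d → ℝ) → M} (hf : LipschitzWith 1 f) (hn : n ≠ 0)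
    (a : Fin d → ℝ) {s : ℝ} (hs : 0 < s) :
    hausdorffContent n (f '' halfOpenCube a s) ≤ ENNReal.ofReal (s ^ n) := by
  have hsub : f '' halfOpenCube a s ⊆
      ⋃ j : ℕ, Metric.ball ((fun _ => f a : ℕ → M) j)
        ((fun j => if j = 0 then s else 0) j) := by
    rintro _ ⟨y, hy, rfl⟩
    refine mem_iUnion.2 ⟨0, ?_⟩
    simp only [if_pos rfl]
    rw [Metric.mem_ball]
    calc dist (f y) (f a) ≤ dist y a := by simpa using hf.dist_le_mul y a
      _ < s := by
          rw [dist_pi_lt_iff hs]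
          intro i
          rw [Real.dist_eq, abs_lt]
          obtain ⟨h1, h2⟩ := hy i
          constructor <;> linarith
  refine le_trans (iInf_le_of_le (fun _ => f a)
    (iInf_le_of_le (fun j => if j = 0 then s else 0) (iInf_le_of_le hsub le_rfl))) ?_
  rw [tsum_eq_single 0 (fun j hj => by simp [hj, zero_pow hn])]
  simp

lemma cube_mem_floor {v : Fin d → ℕ} {x : Fin d → ℝ}
    (hx : x ∈ halfOpenCube (fun i => (v i : ℝ) / 2 ^ k) ((1/2 : ℝ) ^ k)) (i : Fin d) :
    v i = ⌊x i * 2 ^ k⌋₊ := by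
  have h2 : (0:ℝ) < 2 ^ k := by positivity
  obtain ⟨h1, hlt⟩ := hx i
  have hx0 : 0 ≤ x i := le_trans (by positivity) h1
  have hxk : 0 ≤ x i * 2 ^ k := by positivity
  have e : ((1:ℝ)/2) ^ k = (2 ^ k : ℝ)⁻¹ := by rw [one_div, inv_pow]
  symm
  rw [Nat.floor_eq_iff hxk]
  constructor
  · rw [div_le_iff₀ h2] at h1; linarith
  · rw [e] at hlt
    have he : ((v i : ℝ)/2^k + (2^k : ℝ)⁻¹) * 2 ^ k = (v i : ℝ) + 1 := by field_simp
    nlinarith [mul_lt_mul_of_pos_right hlt h2]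

lemma cube_disjoint {v w : Fin d → ℕ} (hvw : v ≠ w) :
    Disjoint (halfOpenCube (fun i => (v i : ℝ) / 2 ^ k) ((1/2 : ℝ) ^ k))
      (halfOpenCube (fun i => (w i : ℝ) / 2 ^ k) ((1/2 : ℝ) ^ k)) := by
  rw [Set.disjoint_left]
  intro x hxv hxw
  exact hvw (funext fun i => (cube_mem_floor hxv i).trans (cube_mem_floor hxw i).symm)

lemma mem_cube_floor {x : Fin d → ℝ} (hx : ∀ i, 0 ≤ x i ∧ x i < 1) (k : ℕ) :
    (∀ i, ⌊x i * 2 ^ k⌋₊ < 2 ^ k) ∧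
    x ∈ halfOpenCube (fun i => ((⌊x i * 2 ^ k⌋₊ : ℕ) : ℝ) / 2 ^ k) ((1/2 : ℝ) ^ k) := by
  have h2 : (0:ℝ) < 2 ^ k := by positivity
  have hxk : ∀ i, 0 ≤ x i * 2 ^ k := fun i => mul_nonneg (hx i).1 h2.le
  have e : ((1:ℝ)/2) ^ k = (2 ^ k : ℝ)⁻¹ := by rw [one_div, inv_pow]
  constructor
  · intro i
    rw [Nat.floor_lt (hxk i)]
    push_cast
    nlinarith [(hx i).2]
  · intro i
    constructor
    · rw [div_le_iff₀ h2]
      exact Nat.floor_le (hxk i)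
    · rw [e]
      have h3 : x i * 2 ^ k < (⌊x i * 2 ^ k⌋₊ : ℝ) + 1 := Nat.lt_floor_add_one _
      rw [← lt_div_iff₀ h2] at h3
      have he : ((⌊x i * 2 ^ k⌋₊ : ℝ) + 1) / 2 ^ k
          = (⌊x i * 2 ^ k⌋₊ : ℝ) / 2 ^ k + (2 ^ k : ℝ)⁻¹ := by field_simp
      linarith [he ▸ h3]

lemma cube_subset_Icc {v : Fin d → ℕ} (hv : ∀ i, v i < 2 ^ k) :
    halfOpenCube (fun i => (v i : ℝ) / 2 ^ k) ((1/2 : ℝ) ^ k)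
      ⊆ Icc (0 : Fin d → ℝ) 1 := by
  intro x hx
  have h2 : (0:ℝ) < 2 ^ k := by positivity
  have e : ((1:ℝ)/2) ^ k = (2 ^ k : ℝ)⁻¹ := by rw [one_div, inv_pow]
  rw [mem_Icc, Pi.le_def, Pi.le_def]
  constructor
  · intro i
    have := (hx i).1
    have : (0:ℝ) ≤ (v i : ℝ) / 2 ^ k := by positivity
    simpa using le_trans this (hx i).1
  · intro i
    have hlt := (hx i).2
    rw [e] at hlt
    have hc : (v i : ℝ) + 1 ≤ 2 ^ k := by exact_mod_cast hv i
    have he : ((v i : ℝ)/2^k + (2^k : ℝ)⁻¹) * 2 ^ k = (v i : ℝ) + 1 := by field_simp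
    have := mul_lt_mul_of_pos_right hlt h2
    rw [he] at this
    have hx1 : x i * 2 ^ k < 2 ^ k := lt_of_lt_of_le this hc
    have : x i < 1 := by nlinarith
    simpa using this.le
end Aux


/-- Counting step (Lemma 5.1): if `f : ℝ^{n+m} → M` is `1`-Lipschitz and for every
`K` there is `k ≤ K` such that the union `U_k` of the dyadic cubes of sidelength
`2^{-k}` in `Q₀ = [0,1]^{n+m}` whose images have small Hausdorff content
(`ℋⁿ_∞(f(Q)) < δ·side(Q)ⁿ`) has Lebesgue measure `> 1 − δ/√n`, then
`ℋ^{n,m}_∞(f, Q₀) ≤ 2δ`. -/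
theorem hausdorffContentNM_le_of_many_small_cubes
    {n m : ℕ} {M : Type*} [MetricSpace M]
    (f : (Fin (n + m) → ℝ) → M) (hf : LipschitzWith 1 f) (δ : ℝ) (hδ : 0 < δ)
    (hU : ∀ K : ℕ, ∃ k ≤ K,
      volume (⋃ (v : Fin (n + m) → ℕ) (_ : ∀ i, v i < 2 ^ k)
          (_ : hausdorffContent n
              (f '' halfOpenCube (fun i => (v i : ℝ) / 2 ^ k) ((1 / 2 : ℝ) ^ k))
            < ENNReal.ofReal (δ * ((1 / 2 : ℝ) ^ k) ^ n)),
          halfOpenCube (fun i => (v i : ℝ) / 2 ^ k) ((1 / 2 : ℝ) ^ k))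
        > ENNReal.ofReal (1 - δ / Real.sqrt n)) :
    hausdorffContentNM n m f (Icc (0 : Fin (n + m) → ℝ) 1)
      ≤ ENNReal.ofReal (2 * δ) := by
  classical
  obtain ⟨k, -, hUk⟩ := hU 0
  have hIcc1 : volume (Icc (0 : Fin (n + m) → ℝ) 1) = 1 := by
    rw [Real.volume_Icc_pi]; simp
  -- dispose of n = 0
  rcases Nat.eq_zero_or_pos n with hn0 | hn
  · exfalso
    refine absurd hUk (not_lt.2 ?_)
    have hle : volume (⋃ (v : Fin (n + m) → ℕ) (_ : ∀ i, v i < 2 ^ k)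
          (_ : hausdorffContent n
              (f '' halfOpenCube (fun i => (v i : ℝ) / 2 ^ k) ((1 / 2 : ℝ) ^ k))
            < ENNReal.ofReal (δ * ((1 / 2 : ℝ) ^ k) ^ n)),
          halfOpenCube (fun i => (v i : ℝ) / 2 ^ k) ((1 / 2 : ℝ) ^ k))
        ≤ volume (Icc (0 : Fin (n + m) → ℝ) 1) := by
      refine measure_mono (iUnion_subset fun v => iUnion_subset fun hv =>
        iUnion_subset fun _ => cube_subset_Icc hv)
    rw [hIcc1] at hle
    have : ENNReal.ofReal (1 - δ / Real.sqrt n) = 1 := by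
      rw [hn0]; simp
    rw [this]
    exact hle

  -- main case : 1 ≤ n
  have hn' : n ≠ 0 := hn.ne'
  have hd : n + m ≠ 0 := by omega
  set s₀ : ℝ := (1 / 2 : ℝ) ^ k with hs₀def
  have hs₀ : 0 < s₀ := by rw [hs₀def]; positivity
  set N := Fintype.card (Fin (n + m) → Fin (2 ^ k)) with hNdef
  set eqv : (Fin (n + m) → Fin (2 ^ k)) ≃ Fin N := Fintype.equivFin _ with heqv
  set G : Finset (Fin (n + m) → Fin (2 ^ k)) := Finset.univ.filter (fun v =>
    hausdorffContent n (f '' halfOpenCube (fun i => ((v i : ℕ) : ℝ) / 2 ^ k) s₀)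
      < ENNReal.ofReal (δ * s₀ ^ n)) with hG
  set B : Finset (Fin (n + m) → Fin (2 ^ k)) := Finset.univ.filter (fun v =>
    ¬ hausdorffContent n (f '' halfOpenCube (fun i => ((v i : ℕ) : ℝ) / 2 ^ k) s₀)
      < ENNReal.ofReal (δ * s₀ ^ n)) with hB
  set a : ℕ → Fin (n + m) → ℝ := fun j =>
    if h : j < N then (fun i => ((eqv.symm ⟨j, h⟩ i : ℕ) : ℝ) / 2 ^ k) else 0 with ha
  set s : ℕ → ℝ := fun j => if j < N then s₀ else 0 with hs
  have hcube0 : ∀ j, ¬ j < N → halfOpenCube (a j) (s j) = ∅ := by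
    intro j h
    rw [ha, hs]; dsimp only; rw [dif_neg h, if_neg h]
    exact halfOpenCube_zero_empty hd _
  have hcube1 : ∀ j (h : j < N), halfOpenCube (a j) (s j)
      = halfOpenCube (fun i => ((eqv.symm ⟨j, h⟩ i : ℕ) : ℝ) / 2 ^ k) s₀ := by
    intro j h
    rw [ha, hs]; dsimp only; rw [dif_pos h, if_pos h]
  -- volume of the union of good cubes
  have hvolG : volume (⋃ v ∈ G, halfOpenCube (fun i => ((v i : ℕ) : ℝ) / 2 ^ k) s₀)
      = (G.card : ℝ≥0∞) * ENNReal.ofReal (s₀ ^ (n + m)) := by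
    rw [measure_biUnion_finset ?_ (fun v _ => measurableSet_halfOpenCube _ _)]
    · rw [Finset.sum_congr rfl (fun v _ => volume_halfOpenCube _ hs₀.le),
        Finset.sum_const, nsmul_eq_mul]
    · intro v _ w _ hvw
      have hne : (fun i => (v i : ℕ)) ≠ (fun i => (w i : ℕ)) := by
        intro h
        exact hvw (funext fun i => Fin.val_injective (congrFun h i))
      rw [hs₀def]
      exact cube_disjoint hne
  have hUeq : (⋃ (v : Fin (n + m) → ℕ) (_ : ∀ i, v i < 2 ^ k)
      (_ : hausdorffContent n
          (f '' halfOpenCube (fun i => (v i : ℝ) / 2 ^ k) s₀)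
        < ENNReal.ofReal (δ * s₀ ^ n)),
      halfOpenCube (fun i => (v i : ℝ) / 2 ^ k) s₀)
      = ⋃ v ∈ G, halfOpenCube (fun i => ((v i : ℕ) : ℝ) / 2 ^ k) s₀ := by
    ext x
    simp only [mem_iUnion, hG, Finset.mem_filter, Finset.mem_univ, true_and]
    constructor
    · rintro ⟨v, hv, hsmall, hx⟩
      exact ⟨fun i => ⟨v i, hv i⟩, hsmall, hx⟩
    · rintro ⟨v, hsmall, hx⟩
      exact ⟨fun i => (v i : ℕ), fun i => (v i).isLt, hsmall, hx⟩
  rw [hUeq, hvolG] at hUk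
  have hcast : (G.card : ℝ≥0∞) * ENNReal.ofReal (s₀ ^ (n + m))
      = ENNReal.ofReal ((G.card : ℝ) * s₀ ^ (n + m)) := by
    rw [ENNReal.ofReal_mul (Nat.cast_nonneg _), ENNReal.ofReal_natCast]
  rw [hcast] at hUk
  have hGpos : 0 < (G.card : ℝ) * s₀ ^ (n + m) :=
    ENNReal.ofReal_pos.mp (lt_of_le_of_lt zero_le hUk)
  have hreal : 1 - δ / Real.sqrt n < (G.card : ℝ) * s₀ ^ (n + m) :=
    (ENNReal.ofReal_lt_ofReal_iff hGpos).mp hUk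
  have hcard : G.card + B.card = N := by
    rw [hG, hB, hNdef]
    rw [Finset.card_filter_add_card_filter_not]
    simp
  have hprod : (N : ℝ) * s₀ ^ (n + m) = 1 := by
    have hNc : (N : ℝ) = ((2 : ℝ) ^ k) ^ (n + m) := by
      rw [hNdef]
      simp [Fintype.card_fun]
    rw [hNc, hs₀def, ← mul_pow, ← mul_pow]
    norm_num
  have htotR : (G.card : ℝ) * s₀ ^ (n + m) + (B.card : ℝ) * s₀ ^ (n + m) = 1 := by
    have h1 : ((G.card + B.card : ℕ) : ℝ) * s₀ ^ (n + m) = 1 := by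
      rw [hcard]; exact hprod
    push_cast at h1
    linarith [h1]
  have hBnn : (0 : ℝ) ≤ (B.card : ℝ) * s₀ ^ (n + m) :=
    mul_nonneg (Nat.cast_nonneg _) (pow_nonneg hs₀.le _)
  have hG1 : (G.card : ℝ) * s₀ ^ (n + m) ≤ 1 := by linarith
  have hsqrt : 1 ≤ Real.sqrt n := Real.one_le_sqrt.mpr (by exact_mod_cast hn)
  have hBle : (B.card : ℝ) * s₀ ^ (n + m) ≤ δ := by
    have h2 : δ / Real.sqrt n ≤ δ := div_le_self hδ.le hsqrt
    linarith
  -- the partition bound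
  have hkey : hausdorffContentNM n m f (Icc (0 : Fin (n + m) → ℝ) 1)
      ≤ ∑' j, hausdorffContent n (f '' halfOpenCube (a j) (s j))
          * ENNReal.ofReal (s j ^ m) := by
    unfold hausdorffContentNM
    refine iInf_le_of_le a (iInf_le_of_le s (iInf_le_of_le ?_ (iInf_le_of_le ?_
      (iInf_le_of_le ?_ (iInf_le_of_le ?_ le_rfl)))))
    · intro j
      rw [hs]; dsimp only
      split
      · exact hs₀.le
      · exact le_rfl
    · intro j
      by_cases h : j < N
      · rw [hcube1 _ h, hs₀def]
        exact cube_subset_Icc (fun i => (eqv.symm ⟨j, h⟩ i).isLt)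
      · rw [hcube0 _ h]
        exact empty_subset _
    · intro j j' hjj'
      simp only [Function.onFun]
      by_cases h : j < N
      · by_cases h' : j' < N
        · rw [hcube1 _ h, hcube1 _ h', hs₀def]
          refine cube_disjoint ?_
          intro hvw
          apply hjj'
          have h1 : eqv.symm ⟨j, h⟩ = eqv.symm ⟨j', h'⟩ :=
            funext fun i => Fin.val_injective (congrFun hvw i)
          have h2 := eqv.symm.injective h1
          exact congrArg Fin.val h2
        · rw [hcube0 _ h']
          exact Set.disjoint_empty _
      · rw [hcube0 _ h]
        exact Set.empty_disjoint _
    · have hsub2 : halfOpenCube (0 : Fin (n + m) → ℝ) 1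
          ⊆ ⋃ j, halfOpenCube (a j) (s j) := by
        intro x hx
        have hx' : ∀ i, 0 ≤ x i ∧ x i < 1 := fun i => by simpa using hx i
        obtain ⟨hb, hmem⟩ := mem_cube_floor hx' k
        refine mem_iUnion.2 ⟨((eqv fun i => ⟨⌊x i * 2 ^ k⌋₊, hb i⟩ : Fin N) : ℕ), ?_⟩
        rw [hcube1 _ (eqv fun i => ⟨⌊x i * 2 ^ k⌋₊, hb i⟩).isLt]
        have he : eqv.symm ⟨((eqv fun i => ⟨⌊x i * 2 ^ k⌋₊, hb i⟩ : Fin N) : ℕ),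
            (eqv fun i => ⟨⌊x i * 2 ^ k⌋₊, hb i⟩).isLt⟩
            = fun i => (⟨⌊x i * 2 ^ k⌋₊, hb i⟩ : Fin (2 ^ k)) := by
          simp
        rw [he, hs₀def]
        exact hmem
      have hmeas1 : volume (halfOpenCube (0 : Fin (n + m) → ℝ) 1) = 1 := by
        rw [volume_halfOpenCube _ zero_le_one]; simp
      have hsub3 : halfOpenCube (0 : Fin (n + m) → ℝ) 1
          ⊆ Icc (0 : Fin (n + m) → ℝ) 1 := by
        intro x hx
        rw [mem_Icc, Pi.le_def, Pi.le_def]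
        constructor
        · intro i; simpa using (hx i).1
        · intro i
          have h2 := (hx i).2
          simp only [Pi.zero_apply, zero_add] at h2
          simpa using h2.le
      have hdiff : volume (Icc (0 : Fin (n + m) → ℝ) 1
          \ halfOpenCube (0 : Fin (n + m) → ℝ) 1) = 0 := by
        rw [measure_diff hsub3 (measurableSet_halfOpenCube _ _).nullMeasurableSet
          (by rw [hmeas1]; exact ENNReal.one_ne_top)]
        rw [hIcc1, hmeas1]
        simp
      refine le_antisymm ?_ zero_le
      rw [← hdiff]
      exact measure_mono (diff_subset_diff_right hsub2)
  refine le_trans hkey ?_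
  have hT0 : ∀ j ∉ Finset.range N,
      hausdorffContent n (f '' halfOpenCube (a j) (s j)) * ENNReal.ofReal (s j ^ m) = 0 := by
    intro j hj
    rw [hcube0 _ (by simpa using hj), image_empty,
      hausdorffContent_empty (f 0) hn', zero_mul]
  rw [tsum_eq_sum hT0]
  have hsum1 : ∑ j ∈ Finset.range N,
      hausdorffContent n (f '' halfOpenCube (a j) (s j)) * ENNReal.ofReal (s j ^ m)
      = ∑ v : Fin (n + m) → Fin (2 ^ k),
          hausdorffContent n (f '' halfOpenCube (fun i => ((v i : ℕ) : ℝ) / 2 ^ k) s₀)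
            * ENNReal.ofReal (s₀ ^ m) := by
    rw [← Fin.sum_univ_eq_sum_range]
    rw [← Equiv.sum_comp eqv.symm (fun v =>
      hausdorffContent n (f '' halfOpenCube (fun i => ((v i : ℕ) : ℝ) / 2 ^ k) s₀)
        * ENNReal.ofReal (s₀ ^ m))]
    refine Finset.sum_congr rfl fun j _ => ?_
    have hsj : s (j : ℕ) = s₀ := by rw [hs]; dsimp only; rw [if_pos j.isLt]
    rw [hcube1 _ j.isLt, hsj]
  rw [hsum1]
  have hsplit : ∑ v : Fin (n + m) → Fin (2 ^ k),
      hausdorffContent n (f '' halfOpenCube (fun i => ((v i : ℕ) : ℝ) / 2 ^ k) s₀)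
        * ENNReal.ofReal (s₀ ^ m)
      = (∑ v ∈ G, hausdorffContent n
            (f '' halfOpenCube (fun i => ((v i : ℕ) : ℝ) / 2 ^ k) s₀)
          * ENNReal.ofReal (s₀ ^ m))
        + ∑ v ∈ B, hausdorffContent n
            (f '' halfOpenCube (fun i => ((v i : ℕ) : ℝ) / 2 ^ k) s₀)
          * ENNReal.ofReal (s₀ ^ m) := by
    rw [hG, hB]
    exact (Finset.sum_filter_add_sum_filter_not _ _ _).symm
  rw [hsplit]
  have hgood : (∑ v ∈ G, hausdorffContent n
        (f '' halfOpenCube (fun i => ((v i : ℕ) : ℝ) / 2 ^ k) s₀)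
      * ENNReal.ofReal (s₀ ^ m)) ≤ ENNReal.ofReal δ := by
    calc (∑ v ∈ G, hausdorffContent n
          (f '' halfOpenCube (fun i => ((v i : ℕ) : ℝ) / 2 ^ k) s₀)
        * ENNReal.ofReal (s₀ ^ m))
        ≤ ∑ _v ∈ G, ENNReal.ofReal (δ * s₀ ^ n) * ENNReal.ofReal (s₀ ^ m) := by
          refine Finset.sum_le_sum fun v hv => ?_
          refine mul_le_mul_left ?_ _
          rw [hG] at hv
          exact le_of_lt (Finset.mem_filter.mp hv).2
      _ = (G.card : ℝ≥0∞) * (ENNReal.ofReal (δ * s₀ ^ n) * ENNReal.ofReal (s₀ ^ m)) := by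
          rw [Finset.sum_const, nsmul_eq_mul]
      _ = ENNReal.ofReal (δ * ((G.card : ℝ) * s₀ ^ (n + m))) := by
          rw [← ENNReal.ofReal_mul (mul_nonneg hδ.le (pow_nonneg hs₀.le n)),
            ← ENNReal.ofReal_natCast G.card,
            ← ENNReal.ofReal_mul (Nat.cast_nonneg _)]
          congr 1
          rw [pow_add]; ring
      _ ≤ ENNReal.ofReal δ := by
          refine ENNReal.ofReal_le_ofReal ?_
          have := mul_le_mul_of_nonneg_left hG1 hδ.le
          simpa using this
  have hbad : (∑ v ∈ B, hausdorffContent n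
        (f '' halfOpenCube (fun i => ((v i : ℕ) : ℝ) / 2 ^ k) s₀)
      * ENNReal.ofReal (s₀ ^ m)) ≤ ENNReal.ofReal δ := by
    calc (∑ v ∈ B, hausdorffContent n
          (f '' halfOpenCube (fun i => ((v i : ℕ) : ℝ) / 2 ^ k) s₀)
        * ENNReal.ofReal (s₀ ^ m))
        ≤ ∑ _v ∈ B, ENNReal.ofReal (s₀ ^ n) * ENNReal.ofReal (s₀ ^ m) := by
          refine Finset.sum_le_sum fun v _ => ?_
          exact mul_le_mul_left (hausdorffContent_image_le hf hn' _ hs₀) _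
      _ = (B.card : ℝ≥0∞) * (ENNReal.ofReal (s₀ ^ n) * ENNReal.ofReal (s₀ ^ m)) := by
          rw [Finset.sum_const, nsmul_eq_mul]
      _ = ENNReal.ofReal ((B.card : ℝ) * s₀ ^ (n + m)) := by
          rw [← ENNReal.ofReal_mul (pow_nonneg hs₀.le n),
            ← ENNReal.ofReal_natCast B.card,
            ← ENNReal.ofReal_mul (Nat.cast_nonneg _)]
          congr 1
          rw [pow_add]
      _ ≤ ENNReal.ofReal δ := ENNReal.ofReal_le_ofReal hBle
  calc _ ≤ ENNReal.ofReal δ + ENNReal.ofReal δ := add_le_add hgood hbad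
    _ = ENNReal.ofReal (2 * δ) := by
        rw [← ENNReal.ofReal_add hδ.le hδ.le, two_mul]
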